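/- Let q be a real number with 0 ≤ q < 1 and let z₀, …, zₙ be elements of a unital complex *-algebra A satisfying the q-sphere relations. For i = (i₀, …, iₙ) ∈ ℕⁿ × ℤ and j = (j₀, …, j_{n−1}) ∈ ℕⁿ, define the monomial ⟨i, j⟩ := z₀^{i₀} ⋯ z_{n−1}^{i_{n−1}} zₙ^{iₙ} (z₀^{j₀} ⋯ z_{n−1}^{j_{n−1}})* if iₙ ≥ 0, and ⟨i, j⟩ := z₀^{i₀} ⋯ z_{n−1}^{i_{n−1}} (zₙ*)^{−iₙ} (z₀^{j₀} ⋯ z_{n−1}^{j_{n−1}})* if iₙ < 0. Then the ℂ-linear span of the set {⟨i, j⟩ : i ∈ ℕⁿ × ℤ, j ∈ ℕⁿ} equals the unital subalgebra of A generated by {z₀, …, zₙ, z₀*, …, zₙ*}. -/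

import Mathlib

open Finset

section helpers
variable {A : Type*} [Ring A] [Module ℂ A] [SMulCommClass ℂ A A] [IsScalarTower ℂ A A]

set_option linter.unusedSectionVars false

lemma qsw_pow_right (a b : A) (c : ℂ) (h : b * a = c • (a * b)) (p : ℕ) :
    b * a ^ p = c ^ p • (a ^ p * b) := by
  induction p with
  | zero => simp
  | succ p ih =>
    rw [pow_succ', ← mul_assoc, h, smul_mul_assoc, mul_assoc, ih, mul_smul_comm, smul_smul]
    simp [pow_succ', mul_assoc]

lemma qsw_pow_left (a b : A) (c : ℂ) (h : b * a = c • (a * b)) (p : ℕ) :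
    b ^ p * a = c ^ p • (a * b ^ p) := by
  induction p with
  | zero => simp
  | succ p ih =>
    rw [pow_succ, mul_assoc, h, mul_smul_comm, ← mul_assoc, ih, smul_mul_assoc, smul_smul]
    simp [pow_succ, mul_assoc, mul_comm]

lemma qsw_move_right : ∀ {m : ℕ} (f : Fin m → A) (a : A),
    (∀ k, ∃ c : ℂ, a * f k = c • (f k * a)) →
    ∃ C : ℂ, a * (List.ofFn f).prod = C • ((List.ofFn f).prod * a) := by
  intro m
  induction m with
  | zero => intro f a _; exact ⟨1, by simp⟩
  | succ m ih =>
    intro f a h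
    obtain ⟨c0, hc0⟩ := h 0
    obtain ⟨C, hC⟩ := ih (fun i => f i.succ) a (fun k => h k.succ)
    refine ⟨c0 * C, ?_⟩
    rw [List.ofFn_succ, List.prod_cons, ← mul_assoc, hc0, smul_mul_assoc, mul_assoc, hC,
      mul_smul_comm, smul_smul, mul_assoc]

lemma qsw_move_left : ∀ {m : ℕ} (f : Fin m → A) (a : A),
    (∀ k, ∃ c : ℂ, f k * a = c • (a * f k)) →
    ∃ C : ℂ, (List.ofFn f).prod * a = C • (a * (List.ofFn f).prod) := by
  intro m
  induction m with
  | zero => intro f a _; exact ⟨1, by simp⟩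
  | succ m ih =>
    intro f a h
    obtain ⟨c0, hc0⟩ := h 0
    obtain ⟨C, hC⟩ := ih (fun i => f i.succ) a (fun k => h k.succ)
    refine ⟨C * c0, ?_⟩
    rw [List.ofFn_succ, List.prod_cons, mul_assoc, hC, mul_smul_comm, ← mul_assoc, hc0,
      smul_mul_assoc, smul_smul, mul_assoc]

lemma qsw_update_succ {m : ℕ} (iv : Fin (m + 1) → ℕ) (j : Fin m) (v : ℕ) (k : Fin m) :
    Function.update iv j.succ v k.succ = Function.update (fun k : Fin m => iv k.succ) j v k := by
  by_cases hk : k = j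
  · subst hk; rw [Function.update_self, Function.update_self]
  · rw [Function.update_of_ne hk, Function.update_of_ne (fun hh => hk (Fin.succ_injective _ hh))]

lemma qsw_absorb_left : ∀ {m : ℕ} (w : Fin m → A) (qc : ℂ),
    (∀ k l : Fin m, k < l → w l * w k = qc • (w k * w l)) →
    ∀ (i : Fin m) (iv : Fin m → ℕ),
    ∃ c : ℂ, w i * (List.ofFn fun k => w k ^ iv k).prod =
      c • (List.ofFn fun k => w k ^ Function.update iv i (iv i + 1) k).prod := by
  intro m
  induction m with
  | zero => intro _ _ _ i; exact i.elim0
  | succ m ih =>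
    intro w qc hw i iv
    induction i using Fin.cases with
    | zero =>
      refine ⟨1, ?_⟩
      rw [one_smul, List.ofFn_succ, List.prod_cons, List.ofFn_succ, List.prod_cons, ← mul_assoc,
        ← pow_succ', Function.update_self]
      simp only [Function.update_of_ne (Fin.succ_ne_zero _)]
    | succ j =>
      obtain ⟨c, hc⟩ := ih (fun k => w k.succ) qc
        (fun k l hkl => hw k.succ l.succ (Fin.succ_lt_succ_iff.mpr hkl)) j (fun k => iv k.succ)
      refine ⟨qc ^ iv 0 * c, ?_⟩
      rw [List.ofFn_succ, List.prod_cons, ← mul_assoc,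
        qsw_pow_right (w 0) (w j.succ) qc (hw 0 j.succ (Fin.succ_pos j)), smul_mul_assoc,
        mul_assoc, hc, mul_smul_comm, smul_smul, List.ofFn_succ, List.prod_cons,
        Function.update_of_ne (Fin.succ_ne_zero j).symm]
      simp only [qsw_update_succ]

lemma qsw_absorb_right : ∀ {m : ℕ} (w : Fin m → A) (qc : ℂ),
    (∀ k l : Fin m, k < l → w l * w k = qc • (w k * w l)) →
    ∀ (i : Fin m) (iv : Fin m → ℕ),
    ∃ c : ℂ, (List.ofFn fun k => w k ^ iv k).prod * w i =
      c • (List.ofFn fun k => w k ^ Function.update iv i (iv i + 1) k).prod := by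
  intro m
  induction m with
  | zero => intro _ _ _ i; exact i.elim0
  | succ m ih =>
    intro w qc hw i iv
    induction i using Fin.cases with
    | zero =>
      obtain ⟨C, hC⟩ := qsw_move_left (fun k : Fin m => w k.succ ^ iv k.succ) (w 0)
        (fun k => ⟨qc ^ iv k.succ,
          qsw_pow_left (w 0) (w k.succ) qc (hw 0 k.succ (Fin.succ_pos k)) (iv k.succ)⟩)
      refine ⟨C, ?_⟩
      rw [List.ofFn_succ, List.prod_cons, mul_assoc, hC, mul_smul_comm, ← mul_assoc,
        ← pow_succ, List.ofFn_succ, List.prod_cons, Function.update_self]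
      simp only [Function.update_of_ne (Fin.succ_ne_zero _)]
    | succ j =>
      obtain ⟨c, hc⟩ := ih (fun k => w k.succ) qc
        (fun k l hkl => hw k.succ l.succ (Fin.succ_lt_succ_iff.mpr hkl)) j (fun k => iv k.succ)
      refine ⟨c, ?_⟩
      rw [List.ofFn_succ, List.prod_cons, mul_assoc, hc, mul_smul_comm, List.ofFn_succ,
        List.prod_cons, Function.update_of_ne (Fin.succ_ne_zero j).symm]
      simp only [qsw_update_succ]

lemma qsw_peel : ∀ {m : ℕ} (w : Fin m → A) (iv : Fin m → ℕ) (i : Fin m),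
    (∀ l, l < i → iv l = 0) → iv i ≠ 0 →
    (List.ofFn fun k => w k ^ iv k).prod =
      w i * (List.ofFn fun k => w k ^ Function.update iv i (iv i - 1) k).prod := by
  intro m
  induction m with
  | zero => intro _ _ i; exact i.elim0
  | succ m ih =>
    intro w iv i
    induction i using Fin.cases with
    | zero =>
      intro _ h0
      obtain ⟨s, hs⟩ : ∃ s, iv 0 = s + 1 := ⟨iv 0 - 1, by omega⟩
      rw [List.ofFn_succ, List.prod_cons, List.ofFn_succ, List.prod_cons, ← mul_assoc,
        Function.update_self, hs]
      simp only [Function.update_of_ne (Fin.succ_ne_zero _)]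
      rw [Nat.add_sub_cancel, pow_succ']
    | succ j =>
      intro hlt hj
      have h0 : iv 0 = 0 := hlt 0 (Fin.succ_pos j)
      rw [List.ofFn_succ, List.prod_cons, List.ofFn_succ, List.prod_cons,
        ih (fun k => w k.succ) (fun k => iv k.succ) j
          (fun l hl => hlt l.succ (Fin.succ_lt_succ_iff.mpr hl)) hj,
        Function.update_of_ne (Fin.succ_ne_zero j).symm, h0, pow_zero]
      simp only [qsw_update_succ, one_mul]

lemma qsw_leftmul {s : Set A} {a : A}
    (h : ∀ x ∈ s, a * x ∈ Submodule.span ℂ s) :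
    ∀ x ∈ Submodule.span ℂ s, a * x ∈ Submodule.span ℂ s := by
  intro x hx
  induction hx using Submodule.span_induction with
  | mem x hx => exact h x hx
  | zero => simp
  | add x y _ _ hx hy => rw [mul_add]; exact add_mem hx hy
  | smul c x _ hx => rw [mul_smul_comm]; exact Submodule.smul_mem _ c hx

end helpers

section defs
variable {A : Type*} [Ring A] [StarRing A] [Algebra ℂ A] [StarModule ℂ A] {n : ℕ}

set_option linter.unusedSectionVars false

def qsZ (z : Fin (n + 1) → A) (iv : Fin n → ℕ) : A :=
  (List.ofFn fun k : Fin n => z k.castSucc ^ iv k).prod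

def qsT (z : Fin (n + 1) → A) (iN : ℤ) : A :=
  if 0 ≤ iN then z (Fin.last n) ^ iN.toNat else star (z (Fin.last n)) ^ (-iN).toNat

def qsMon (z : Fin (n + 1) → A) (iv : Fin n → ℕ) (iN : ℤ) (jv : Fin n → ℕ) : A :=
  qsZ z iv * qsT z iN * star (qsZ z jv)

def qsSet (z : Fin (n + 1) → A) : Set A :=
  {a | ∃ (iv : Fin n → ℕ) (iN : ℤ) (jv : Fin n → ℕ), a = qsMon z iv iN jv}

lemma qsw_star_prod_mem {S : Subalgebra ℂ A} : ∀ (l : List A),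
    (∀ x ∈ l, star x ∈ S) → star l.prod ∈ S := by
  intro l
  induction l with
  | nil => intro _; simpa using S.one_mem
  | cons a l ih =>
    intro h
    rw [List.prod_cons, star_mul]
    exact mul_mem (ih fun x hx => h x (List.mem_cons_of_mem _ hx)) (h a List.mem_cons_self)

end defs

/-- If `0 ≤ q < 1` and `z 0, …, z n` satisfy the `q`-sphere relations in
a unital complex *-algebra `A`, then the ℂ-linear span of the monomials
`z₀^{i₀} ⋯ z_{n−1}^{i_{n−1}} zₙ^{iₙ} (z₀^{j₀} ⋯ z_{n−1}^{j_{n−1}})*` (with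
`(zₙ*)^{−iₙ}` in place of `zₙ^{iₙ}` when `iₙ < 0`) equals the unital subalgebra of `A`
generated by `z₀, …, zₙ` and their adjoints. -/
theorem qSphere_monomials_span
    {A : Type*} [Ring A] [StarRing A] [Algebra ℂ A] [StarModule ℂ A]
    {n : ℕ} (q : ℝ) (hq0 : 0 ≤ q) (hq1 : q < 1) (z : Fin (n + 1) → A)
    (rel1 : ∀ i j : Fin (n + 1), i < j → z j * z i = (q : ℂ) • (z i * z j))
    (rel2 : ∀ i j : Fin (n + 1), i ≠ j → star (z i) * z j = (q : ℂ) • (z j * star (z i)))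
    (rel3 : ∀ i : Fin (n + 1), star (z i) * z i =
      z i * star (z i) + ((1 - q ^ 2 : ℝ) : ℂ) • ∑ j ∈ Finset.Ioi i, z j * star (z j))
    (rel4 : ∑ j : Fin (n + 1), z j * star (z j) = 1) :
    Submodule.span ℂ
      {a : A | ∃ (iv : Fin n → ℕ) (iN : ℤ) (jv : Fin n → ℕ),
        a = (List.ofFn fun k : Fin n => z k.castSucc ^ iv k).prod *
            (if 0 ≤ iN then z (Fin.last n) ^ iN.toNat
              else star (z (Fin.last n)) ^ (-iN).toNat) *
            star ((List.ofFn fun k : Fin n => z k.castSucc ^ jv k).prod)} =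
    Subalgebra.toSubmodule
      (Algebra.adjoin ℂ (Set.range z ∪ Set.range fun i => star (z i))) := by
  show Submodule.span ℂ (qsSet z) = _
  set S := Submodule.span ℂ (qsSet z) with hSdef
  -- basic commutation facts
  have hqc : ∀ k l : Fin n, k < l →
      z l.castSucc * z k.castSucc = (q : ℂ) • (z k.castSucc * z l.castSucc) :=
    fun k l h => rel1 _ _ (by simpa using h)
  have hmem : ∀ iv iN jv, qsMon z iv iN jv ∈ S := fun iv iN jv =>
    Submodule.subset_span ⟨iv, iN, jv, rfl⟩
  have hmem' : ∀ iv iN jv, qsZ z iv * (qsT z iN * star (qsZ z jv)) ∈ S := by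
    intro iv iN jv
    have := hmem iv iN jv
    rwa [qsMon, mul_assoc] at this
  have hZ1 : ∀ iv : Fin n → ℕ, (∀ i, iv i = 0) → qsZ z iv = 1 := by
    intro iv h
    simp [qsZ, h]
  have hmem'' : ∀ iN jv, qsT z iN * star (qsZ z jv) ∈ S := by
    intro iN jv
    have := hmem' (fun _ => 0) iN jv
    rwa [hZ1 _ (fun _ => rfl), one_mul] at this
  have hA : ∀ (i : Fin n) (iv : Fin n → ℕ), ∃ c : ℂ,
      z i.castSucc * qsZ z iv = c • qsZ z (Function.update iv i (iv i + 1)) :=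
    fun i iv => qsw_absorb_left _ _ hqc i iv
  have hB : ∀ (i : Fin n) (iv : Fin n → ℕ), ∃ c : ℂ,
      qsZ z iv * z i.castSucc = c • qsZ z (Function.update iv i (iv i + 1)) :=
    fun i iv => qsw_absorb_right _ _ hqc i iv
  have hBstar : ∀ (i : Fin n) (jv : Fin n → ℕ), ∃ c : ℂ,
      star (z i.castSucc) * star (qsZ z jv) =
        c • star (qsZ z (Function.update jv i (jv i + 1))) := by
    intro i jv
    obtain ⟨c, hc⟩ := hB i jv
    exact ⟨star c, by rw [← star_mul, hc, star_smul]⟩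
  have hIoi : Finset.Ioi (Fin.last n) = ∅ := by
    ext x
    simp [Finset.mem_Ioi, not_lt.mpr (Fin.le_last x)]
  have hcomm : star (z (Fin.last n)) * z (Fin.last n) =
      z (Fin.last n) * star (z (Fin.last n)) := by
    have := rel3 (Fin.last n)
    rwa [hIoi, Finset.sum_empty, smul_zero, add_zero] at this
  have hsplit : z (Fin.last n) * star (z (Fin.last n)) =
      1 - ∑ k : Fin n, z k.castSucc * star (z k.castSucc) := by
    rw [eq_sub_iff_add_eq, add_comm]
    rw [Fin.sum_univ_castSucc] at rel4
    exact rel4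
  have hsc : ∀ k : Fin n, star (z k.castSucc) * star (z (Fin.last n)) =
      star ((q : ℂ)) • (star (z (Fin.last n)) * star (z k.castSucc)) := by
    intro k
    rw [← star_mul, rel1 _ _ (Fin.castSucc_lt_last k), star_smul, star_mul]
  -- G1 : multiplication by z i.castSucc preserves S
  have G1 : ∀ (i : Fin n), ∀ x ∈ S, z i.castSucc * x ∈ S := by
    intro i
    apply qsw_leftmul
    rintro x ⟨iv, iN, jv, rfl⟩
    obtain ⟨c, hc⟩ := hA i iv
    simp only [qsMon, ← mul_assoc]
    rw [hc, smul_mul_assoc, smul_mul_assoc]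
    exact Submodule.smul_mem _ _ (hmem _ _ _)
  -- G2 : multiplication by z (last n) preserves S
  have G2 : ∀ x ∈ S, z (Fin.last n) * x ∈ S := by
    apply qsw_leftmul
    rintro x ⟨iv, iN, jv, rfl⟩
    obtain ⟨C, hC⟩ := qsw_move_right (fun k : Fin n => z k.castSucc ^ iv k) (z (Fin.last n))
      (fun k => ⟨(q : ℂ) ^ iv k, qsw_pow_right _ _ _ (rel1 _ _ (Fin.castSucc_lt_last k)) _⟩)
    have hC' : z (Fin.last n) * qsZ z iv = C • (qsZ z iv * z (Fin.last n)) := hC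
    have key : z (Fin.last n) * qsMon z iv iN jv =
        C • (qsZ z iv * ((z (Fin.last n) * qsT z iN) * star (qsZ z jv))) := by
      simp only [qsMon, ← mul_assoc]
      rw [hC', smul_mul_assoc, smul_mul_assoc]
    rw [key]
    apply Submodule.smul_mem
    by_cases h : 0 ≤ iN
    · have hT : z (Fin.last n) * qsT z iN = qsT z (iN + 1) := by
        simp only [qsT, if_pos h, if_pos (by omega : (0:ℤ) ≤ iN + 1)]
        rw [← pow_succ']
        congr 1
        omega
      rw [hT]
      exact hmem' iv (iN + 1) jv
    · have hp : 1 ≤ (-iN).toNat := by omega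
      have hTsplit : qsT z iN =
          star (z (Fin.last n)) * star (z (Fin.last n)) ^ ((-iN).toNat - 1) := by
        simp only [qsT, if_neg h]
        rw [← pow_succ']
        congr 1
        omega
      have hT' : qsT z (iN + 1) = star (z (Fin.last n)) ^ ((-iN).toNat - 1) := by
        by_cases h1 : 0 ≤ iN + 1
        · have hiN : iN = -1 := by omega
          subst hiN
          simp [qsT]
        · simp only [qsT, if_neg h1]
          congr 1
          omega
      have hzl : z (Fin.last n) * qsT z iN =
          qsT z (iN + 1) - ∑ k : Fin n, (star ((q:ℂ))) ^ ((-iN).toNat - 1) •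
            (z k.castSucc * (star (z (Fin.last n)) ^ ((-iN).toNat - 1) * star (z k.castSucc))) := by
        rw [hTsplit, ← mul_assoc, hsplit, sub_mul, one_mul, hT']
        congr 1
        rw [Finset.sum_mul]
        refine Finset.sum_congr rfl fun k _ => ?_
        rw [mul_assoc, qsw_pow_right _ _ _ (hsc k) _, mul_smul_comm]
      rw [hzl, sub_mul, mul_sub]
      apply Submodule.sub_mem
      · exact hmem' iv (iN + 1) jv
      · rw [Finset.sum_mul, Finset.mul_sum]
        apply Submodule.sum_mem
        intro k _
        rw [smul_mul_assoc, mul_smul_comm]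
        apply Submodule.smul_mem
        obtain ⟨c1, hc1⟩ := hB k iv
        obtain ⟨c2, hc2⟩ := hBstar k jv
        have shape : qsZ z iv * (z k.castSucc *
              (star (z (Fin.last n)) ^ ((-iN).toNat - 1) * star (z k.castSucc)) * star (qsZ z jv)) =
            (c1 * c2) • (qsZ z (Function.update iv k (iv k + 1)) *
              (star (z (Fin.last n)) ^ ((-iN).toNat - 1) *
                star (qsZ z (Function.update jv k (jv k + 1))))) := by
          simp only [← mul_assoc]
          rw [hc1, smul_mul_assoc, smul_mul_assoc, smul_mul_assoc, mul_assoc _ _ (star (qsZ z jv)),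
            hc2, mul_smul_comm, smul_smul]
        rw [shape]
        apply Submodule.smul_mem
        have := hmem' (Function.update iv k (iv k + 1)) (iN + 1) (Function.update jv k (jv k + 1))
        rwa [hT'] at this
  -- left multiplication by star generators
  have hTleft : ∀ (k : Fin n) (iN : ℤ), ∃ c : ℂ,
      star (z k.castSucc) * qsT z iN = c • (qsT z iN * star (z k.castSucc)) := by
    intro k iN
    by_cases h : 0 ≤ iN
    · refine ⟨(q : ℂ) ^ iN.toNat, ?_⟩
      simp only [qsT, if_pos h]
      exact qsw_pow_right _ _ _ (rel2 _ _ (Fin.castSucc_lt_last k).ne) _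
    · refine ⟨(star ((q : ℂ))) ^ (-iN).toNat, ?_⟩
      simp only [qsT, if_neg h]
      exact qsw_pow_right _ _ _ (hsc k) _
  have base : ∀ (iv : Fin n → ℕ), (∀ i, iv i = 0) →
      ∀ (k : Fin (n + 1)) (iN : ℤ) (jv : Fin n → ℕ), star (z k) * qsMon z iv iN jv ∈ S := by
    intro iv h0 k iN jv
    have hm : qsMon z iv iN jv = qsT z iN * star (qsZ z jv) := by
      rw [qsMon, hZ1 iv h0, one_mul]
    rw [hm]
    induction k using Fin.lastCases with
    | cast k' =>
      obtain ⟨c, hc⟩ := hTleft k' iN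
      obtain ⟨c2, hc2⟩ := hBstar k' jv
      rw [← mul_assoc, hc, smul_mul_assoc, mul_assoc, hc2, mul_smul_comm, smul_smul]
      exact Submodule.smul_mem _ _ (hmem'' iN _)
    | last =>
      by_cases hpos : 0 < iN
      · have hTs : qsT z iN = z (Fin.last n) * z (Fin.last n) ^ (iN.toNat - 1) := by
          simp only [qsT, if_pos hpos.le]
          rw [← pow_succ']
          congr 1
          omega
        have hT2 : qsT z (iN - 1) = z (Fin.last n) ^ (iN.toNat - 1) := by
          simp only [qsT, if_pos (by omega : (0:ℤ) ≤ iN - 1)]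
          congr 1
          omega
        have hkey : star (z (Fin.last n)) * qsT z iN =
            qsT z (iN - 1) - ∑ k : Fin n, ((q : ℂ)) ^ (iN.toNat - 1) •
              (z k.castSucc * (z (Fin.last n) ^ (iN.toNat - 1) * star (z k.castSucc))) := by
          rw [hTs, ← mul_assoc, hcomm, hsplit, sub_mul, one_mul, hT2]
          congr 1
          rw [Finset.sum_mul]
          refine Finset.sum_congr rfl fun k _ => ?_
          rw [mul_assoc, qsw_pow_right _ _ _ (rel2 _ _ (Fin.castSucc_lt_last k).ne) _,
            mul_smul_comm]
        rw [← mul_assoc, hkey, sub_mul]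
        apply Submodule.sub_mem
        · exact hmem'' _ _
        · rw [Finset.sum_mul]
          apply Submodule.sum_mem
          intro k _
          rw [smul_mul_assoc]
          apply Submodule.smul_mem
          obtain ⟨c2, hc2⟩ := hBstar k jv
          rw [mul_assoc, mul_assoc, hc2, mul_smul_comm, mul_smul_comm]
          apply Submodule.smul_mem
          rw [← hT2]
          exact G1 k _ (hmem'' _ _)
      · have hT2 : star (z (Fin.last n)) * qsT z iN = qsT z (iN - 1) := by
          by_cases h0' : iN = 0
          · subst h0'
            simp [qsT]
          · simp only [qsT, if_neg (by omega : ¬ (0:ℤ) ≤ iN),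
              if_neg (by omega : ¬ (0:ℤ) ≤ iN - 1)]
            rw [← pow_succ']
            congr 1
            omega
        rw [← mul_assoc, hT2]
        exact hmem'' _ _
  have G3 : ∀ (N : ℕ) (iv : Fin n → ℕ), (∑ i, iv i) ≤ N →
      ∀ (k : Fin (n + 1)) (iN : ℤ) (jv : Fin n → ℕ), star (z k) * qsMon z iv iN jv ∈ S := by
    intro N
    induction N with
    | zero =>
      intro iv hsum k iN jv
      refine base iv (fun i => ?_) k iN jv
      exact Finset.sum_eq_zero_iff.mp (Nat.le_zero.mp hsum) i (Finset.mem_univ i)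
    | succ N ih =>
      intro iv hsum k iN jv
      by_cases h0 : ∀ i, iv i = 0
      · exact base iv h0 k iN jv
      · push_neg at h0
        have hns : (Finset.univ.filter (fun i : Fin n => iv i ≠ 0)).Nonempty := by
          obtain ⟨i, hi⟩ := h0
          exact ⟨i, by simp [hi]⟩
        set i := (Finset.univ.filter (fun i : Fin n => iv i ≠ 0)).min' hns with hidef
        have hi : iv i ≠ 0 := by
          have := Finset.min'_mem _ hns
          simpa using this
        have hmin : ∀ l, l < i → iv l = 0 := by
          intro l hl
          by_contra hcon
          exact absurd (Finset.min'_le _ l (by simp [hcon])) (not_le.mpr hl)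
        have hpeel := qsw_peel (fun k : Fin n => z k.castSucc) iv i hmin hi
        have hsum' : (∑ j, Function.update iv i (iv i - 1) j) ≤ N := by
          have h1 : ∑ j, iv j = iv i + ∑ j ∈ Finset.univ.erase i, iv j :=
            (Finset.add_sum_erase _ _ (Finset.mem_univ i)).symm
          have h2 : ∑ j, Function.update iv i (iv i - 1) j =
              (iv i - 1) + ∑ j ∈ Finset.univ.erase i, Function.update iv i (iv i - 1) j := by
            rw [← Finset.add_sum_erase _ _ (Finset.mem_univ i), Function.update_self]
          have h3 : ∑ j ∈ Finset.univ.erase i, Function.update iv i (iv i - 1) j =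
              ∑ j ∈ Finset.univ.erase i, iv j :=
            Finset.sum_congr rfl fun j hj => by
              rw [Function.update_of_ne (Finset.ne_of_mem_erase hj)]
          omega
        have hMon : qsMon z iv iN jv =
            z i.castSucc * qsMon z (Function.update iv i (iv i - 1)) iN jv := by
          simp only [qsMon]
          rw [show qsZ z iv =
            z i.castSucc * qsZ z (Function.update iv i (iv i - 1)) from hpeel]
          simp only [mul_assoc]
        by_cases hk : k = i.castSucc
        · subst hk
          rw [hMon, ← mul_assoc, rel3 i.castSucc, add_mul, smul_mul_assoc, Finset.sum_mul]
          apply Submodule.add_mem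
          · rw [mul_assoc]
            exact G1 i _ (ih _ hsum' i.castSucc iN jv)
          · apply Submodule.smul_mem
            apply Submodule.sum_mem
            intro j _
            rw [mul_assoc]
            have hmemj := ih _ hsum' j iN jv
            rcases Fin.eq_castSucc_or_eq_last j with ⟨j', rfl⟩ | rfl
            · exact G1 j' _ hmemj
            · exact G2 _ hmemj
        · rw [hMon, ← mul_assoc, rel2 k i.castSucc hk, smul_mul_assoc, mul_assoc]
          exact Submodule.smul_mem _ _ (G1 i _ (ih _ hsum' k iN jv))
  -- conclusion
  apply le_antisymm
  · rw [Submodule.span_le]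
    rintro x ⟨iv, iN, jv, rfl⟩
    simp only [SetLike.mem_coe, Subalgebra.mem_toSubmodule]
    have hz1 : ∀ j : Fin (n + 1),
        z j ∈ Algebra.adjoin ℂ (Set.range z ∪ Set.range fun i => star (z i)) :=
      fun j => Algebra.subset_adjoin (Or.inl ⟨j, rfl⟩)
    have hz2 : ∀ j : Fin (n + 1),
        star (z j) ∈ Algebra.adjoin ℂ (Set.range z ∪ Set.range fun i => star (z i)) :=
      fun j => Algebra.subset_adjoin (Or.inr ⟨j, rfl⟩)
    refine mul_mem (mul_mem ?_ ?_) ?_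
    · apply list_prod_mem
      intro x hx
      rw [List.mem_ofFn] at hx
      obtain ⟨k, rfl⟩ := hx
      exact pow_mem (hz1 _) _
    · rw [qsT]
      split
      · exact pow_mem (hz1 _) _
      · exact pow_mem (hz2 _) _
    · apply qsw_star_prod_mem
      intro x hx
      rw [List.mem_ofFn] at hx
      obtain ⟨k, rfl⟩ := hx
      rw [star_pow]
      exact pow_mem (hz2 _) _
  · rw [Algebra.adjoin_eq_span, Submodule.span_le]
    intro x hx
    obtain ⟨l, hl, rfl⟩ := Submonoid.exists_list_of_mem_closure hx
    clear hx
    have main : ∀ (l : List A),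
        (∀ y ∈ l, y ∈ (Set.range z ∪ Set.range fun i => star (z i))) → l.prod ∈ S := by
      intro l
      induction l with
      | nil =>
        intro _
        have := hmem (fun _ => 0) 0 (fun _ => 0)
        simpa [qsMon, qsT, hZ1 (fun _ => 0) (fun _ => rfl)] using this
      | cons a l ihl =>
        intro hal
        rw [List.prod_cons]
        have hl' := ihl (fun y hy => hal y (List.mem_cons_of_mem _ hy))
        rcases hal a List.mem_cons_self with h | h
        · obtain ⟨j, rfl⟩ := h
          rcases Fin.eq_castSucc_or_eq_last j with ⟨j', rfl⟩ | rfl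
          · exact G1 j' _ hl'
          · exact G2 _ hl'
        · obtain ⟨j, rfl⟩ := h
          refine qsw_leftmul ?_ _ hl'
          rintro x ⟨iv, iN, jv, rfl⟩
          exact G3 _ iv le_rfl j iN jv
    exact main l hl
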